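/- arXiv:1602.06996 — 4 statements merged into one kernel-verified Lean document; each statement's English description precedes it below -/
import Mathlib

section
/- Let Γ be a group, q a prime power, and ρ: Γ → GL_n(𝔽̄_q) an irreducible representation such that σ∘ρ is conjugate to ρ in GL_n(𝔽̄_q), where σ is the entrywise q-power Frobenius. Assume ρ takes values in GL_n(𝔽_{q^d}) for some d. Then ρ is conjugate to a representation valued in GL_n(𝔽_q). -/
open Polynomial Finset
open scoped Matrix

lemma span_fix (K : Type) [Field K] (n d Q : ℕ) (hd : 0 < d) (hQ : 2 ≤ Q)
    (s : Finset K) (hs : ∀ c ∈ s, c ^ Q ^ d = c) (hcard : Q ^ d ≤ s.card)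
    (ψ : (Fin n → K) →+ (Fin n → K))
    (hsmul : ∀ (a : K) (u : Fin n → K), ψ (a • u) = a ^ Q • ψ u)
    (v : Fin n → K) (hv : ψ^[d] v = v) :
    v ∈ Submodule.span K {r : Fin n → K | ψ r = r} := by
  classical
  by_contra hvS
  obtain ⟨f, hfv, hfS⟩ := (Submodule.span K {r : Fin n → K | ψ r = r}).exists_dual_map_eq_bot_of_notMem hvS inferInstance
  have hf0 : ∀ r, ψ r = r → f r = 0 := by
    intro r hr
    have : f r ∈ Submodule.map f (Submodule.span K {r : Fin n → K | ψ r = r}) :=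
      Submodule.mem_map_of_mem (Submodule.subset_span hr)
    rw [hfS] at this
    exact (Submodule.mem_bot K).mp this
  -- the auxiliary vectors are fixed
  have hiter : ∀ k, ψ^[k + 1] v = ψ (ψ^[k] v) := fun k => Function.iterate_succ_apply' ψ k v
  have hwfix : ∀ c ∈ s, ψ (∑ i ∈ range d, c ^ Q ^ i • ψ^[i] v) = ∑ i ∈ range d, c ^ Q ^ i • ψ^[i] v := by
    intro c hc
    rw [map_sum]
    have h1 : ∀ i ∈ range d, ψ (c ^ Q ^ i • ψ^[i] v) = c ^ Q ^ (i+1) • ψ^[i+1] v := by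
      intro i _
      rw [hsmul, ← pow_mul, ← pow_succ, hiter]
    rw [Finset.sum_congr rfl h1]
    have h2 : ∑ i ∈ range d, c ^ Q ^ (i+1) • ψ^[i+1] v
        = ∑ i ∈ range (d+1), c ^ Q ^ i • ψ^[i] v - c ^ Q ^ 0 • ψ^[0] v := by
      rw [Finset.sum_range_succ' (fun i => c ^ Q ^ i • ψ^[i] v) d]
      abel
    rw [h2, Finset.sum_range_succ, hv, hs c hc]
    simp only [pow_zero, pow_one, Function.iterate_zero_apply]
    abel
  -- the polynomial
  set P : K[X] := ∑ i ∈ range d, C (f (ψ^[i] v)) * X ^ Q ^ i with hP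
  have heval : ∀ c ∈ s, P.eval c = 0 := by
    intro c hc
    have : P.eval c = f (∑ i ∈ range d, c ^ Q ^ i • ψ^[i] v) := by
      rw [map_sum, hP, eval_finset_sum]
      refine Finset.sum_congr rfl fun i _ => ?_
      rw [eval_mul, eval_C, eval_pow, eval_X, map_smul, smul_eq_mul, mul_comm]
    rw [this, hf0 _ (hwfix c hc)]
  have hdeg : P.natDegree < s.card := by
    have h1 : P.natDegree ≤ Q ^ (d - 1) := by
      refine natDegree_sum_le_of_forall_le _ _ fun i hi => ?_
      refine (natDegree_C_mul_X_pow_le _ _).trans ?_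
      exact Nat.pow_le_pow_right (by omega) (by simp at hi; omega)
    have h2 : Q ^ (d - 1) < Q ^ d := Nat.pow_lt_pow_right (by omega) (by omega)
    omega
  have hP0 : P = 0 := Polynomial.eq_zero_of_natDegree_lt_card_of_eval_eq_zero' P s heval hdeg
  have : P.coeff 1 = f v := by
    rw [hP, Polynomial.finset_sum_coeff]
    have : ∀ i ∈ range d, (C (f (ψ^[i] v)) * X ^ Q ^ i).coeff 1
        = if i = 0 then f v else 0 := by
      intro i _
      rw [coeff_C_mul, coeff_X_pow]
      rcases Nat.eq_zero_or_pos i with h | h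
      · subst h; simp
      · have h1 : 1 < Q ^ i := Nat.one_lt_pow (by omega) (by omega)
        rw [if_neg (by omega), mul_zero, if_neg (by omega)]
    rw [Finset.sum_congr rfl this, Finset.sum_ite_eq' (range d) 0]
    simp [hd]
  rw [hP0] at this
  simp at this
  exact hfv this.symm

/-- Let `Γ` be a group, `q = p^m` a prime power, and
`ρ : Γ → GL_n(𝔽̄_q)` an irreducible representation (over the algebraically closed field
`K = 𝔽̄_q`) such that `σ ∘ ρ` is conjugate to `ρ` in `GL_n(𝔽̄_q)`, where `σ` is the entrywise
`q`-power Frobenius. Assume `ρ` takes values in `GL_n(𝔽_{q^d})` for some `d` (i.e. all matrix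
entries are fixed by the `q^d`-power map). Then `ρ` is conjugate to a representation valued in
`GL_n(𝔽_q)` (i.e. with all matrix entries fixed by the `q`-power map). -/
theorem stmt2 (Γ : Type) [Group Γ] (p m q n : ℕ) (hp : p.Prime) (hm : 0 < m) (hq : q = p ^ m)
    (K : Type) [Field K] [IsAlgClosed K] [CharP K p]
    (ρ : Γ →* GL (Fin n) K)
    (hirr : ∀ W : Submodule K (Fin n → K),
      (∀ γ : Γ, ∀ v ∈ W, ((ρ γ).val).mulVec v ∈ W) → W = ⊥ ∨ W = ⊤)
    (hconj : ∃ g : GL (Fin n) K,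
      ∀ γ : Γ, ((ρ γ).val).map (fun x => x ^ q) = (g⁻¹ * ρ γ * g).val)
    (hfin : ∃ d : ℕ, 0 < d ∧ ∀ γ : Γ, ∀ i j : Fin n,
      ((ρ γ).val i j) ^ q ^ d = (ρ γ).val i j) :
    ∃ h : GL (Fin n) K, ∀ γ : Γ, ∀ i j : Fin n,
      ((h * ρ γ * h⁻¹).val i j) ^ q = (h * ρ γ * h⁻¹).val i j := by
  classical
  rcases Nat.eq_zero_or_pos n with hn0 | hn
  · exact ⟨1, fun γ i j => absurd i.isLt (by omega)⟩
  have hq2 : 2 ≤ q := by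
    have := hp.two_le
    calc 2 = 2 ^ 1 := (pow_one 2).symm
    _ ≤ p ^ m := Nat.pow_le_pow_left this m |>.trans' (Nat.pow_le_pow_right (by omega) hm) |>.trans le_rfl
    _ = q := hq.symm
  haveI : Fact p.Prime := ⟨hp⟩
  -- Frobenius
  set φ : K →+* K := iterateFrobenius K p m with hφdef
  have hφ : ∀ x : K, φ x = x ^ q := fun x => by
    rw [hφdef, iterateFrobenius_def, hq]
  -- entrywise Frobenius on GL
  set σM : GL (Fin n) K →* GL (Fin n) K := Units.map (RingHom.toMonoidHom (RingHom.mapMatrix φ)) with hσMdef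
  have hσval : ∀ u : GL (Fin n) K, (σM u).val = (u.val).map φ := fun u => rfl
  obtain ⟨g0, hg0⟩ := hconj
  have hσρ : ∀ γ : Γ, σM (ρ γ) = g0⁻¹ * ρ γ * g0 := by
    intro γ
    apply Units.ext
    rw [hσval, ← hg0 γ]
    ext i j
    simp only [Matrix.map_apply]
    rw [hφ]
  obtain ⟨d, hd, hfix⟩ := hfin
  -- iterates of σM
  have hitermul : ∀ (k : ℕ) (u v : GL (Fin n) K), σM^[k] (u * v) = σM^[k] u * σM^[k] v := by
    intro k
    induction k with
    | zero => intro u v; rfl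
    | succ k ih =>
      intro u v
      simp only [Function.iterate_succ_apply, map_mul, ih]
  have hiterinv : ∀ (k : ℕ) (u : GL (Fin n) K), σM^[k] u⁻¹ = (σM^[k] u)⁻¹ := by
    intro k
    induction k with
    | zero => intro u; rfl
    | succ k ih =>
      intro u
      simp only [Function.iterate_succ_apply, map_inv, ih]
  have hiterone : ∀ k : ℕ, σM^[k] (1 : GL (Fin n) K) = 1 := by
    intro k
    induction k with
    | zero => rfl
    | succ k ih => rw [Function.iterate_succ_apply, map_one, ih]
  have hiterval : ∀ (k : ℕ) (u : GL (Fin n) K) (i j : Fin n),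
      (σM^[k] u).val i j = (u.val i j) ^ q ^ k := by
    intro k
    induction k with
    | zero => intro u i j; simp
    | succ k ih =>
      intro u i j
      rw [Function.iterate_succ_apply, ih, hσval, Matrix.map_apply, hφ, ← pow_mul,
        pow_succ', pow_mul]
  -- σ^d fixes ρ
  have hσdρ : ∀ γ : Γ, σM^[d] (ρ γ) = ρ γ := by
    intro γ
    apply Units.ext
    ext i j
    rw [hiterval, hfix]
  -- commutation of cocycle products with ρ
  have keyP : ∀ (g : GL (Fin n) K), (∀ γ, σM (ρ γ) = g⁻¹ * ρ γ * g) →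
      ∀ (Pk : ℕ → GL (Fin n) K), Pk 0 = 1 → (∀ k, Pk (k+1) = Pk k * σM^[k] g) →
      ∀ (k : ℕ) (γ : Γ), σM^[k] (ρ γ) = (Pk k)⁻¹ * ρ γ * Pk k := by
    intro g hg Pk hPk0 hPkS k
    induction k with
    | zero => intro γ; simp [hPk0]
    | succ k ih =>
      intro γ
      rw [Function.iterate_succ_apply, hg γ, hitermul, hitermul, hiterinv, ih, hPkS]
      group
  -- the cocycle product for g0
  set Pk : ℕ → GL (Fin n) K :=
    fun k => Nat.rec (motive := fun _ => GL (Fin n) K) 1 (fun i acc => acc * σM^[i] g0) k with hPkdef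
  have hPk0 : Pk 0 = 1 := rfl
  have hPkS : ∀ k, Pk (k+1) = Pk k * σM^[k] g0 := fun k => rfl
  have hcommA : ∀ γ : Γ, (ρ γ).val * (Pk d).val = (Pk d).val * (ρ γ).val := by
    intro γ
    have h1 := keyP g0 hσρ Pk hPk0 hPkS d γ
    rw [hσdρ γ] at h1
    have h2 : Pk d * ρ γ = ρ γ * Pk d := by
      have := congrArg (fun x => Pk d * x) h1
      simp only [← mul_assoc, mul_inv_cancel, one_mul] at this
      exact this
    have := congrArg Units.val h2
    simpa using this.symm
  -- Schur: Pk d is scalar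
  haveI : Nonempty (Fin n) := ⟨⟨0, hn⟩⟩
  obtain ⟨lam, hlam⟩ : ∃ lam : K, (Pk d).val = algebraMap K (Matrix (Fin n) (Fin n) K) lam := by
    set A : Matrix (Fin n) (Fin n) K := (Pk d).val with hA
    set T : Module.End K (Fin n → K) := Matrix.mulVecLin A with hT
    obtain ⟨lam, hlam⟩ := Module.End.exists_eigenvalue T
    have hWinv : ∀ γ : Γ, ∀ v ∈ Module.End.eigenspace T lam,
        ((ρ γ).val).mulVec v ∈ Module.End.eigenspace T lam := by
      intro γ v hv
      rw [Module.End.mem_eigenspace_iff] at hv ⊢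
      rw [hT] at hv ⊢
      simp only [Matrix.mulVecLin_apply] at hv ⊢
      rw [Matrix.mulVec_mulVec, ← hcommA γ, ← Matrix.mulVec_mulVec, hv, Matrix.mulVec_smul]
    rcases hirr _ hWinv with hbot | htop
    · exact absurd hbot (Module.End.hasEigenvalue_iff.mp hlam)
    · refine ⟨lam, ?_⟩
      ext i j
      have hj : (Pi.single j 1 : Fin n → K) ∈ Module.End.eigenspace T lam := htop ▸ Submodule.mem_top
      rw [Module.End.mem_eigenspace_iff, hT] at hj
      have := congrFun hj i
      simp only [Matrix.mulVecLin_apply] at this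
      rw [Matrix.mulVec_single_one] at this
      simp only [Matrix.col_apply] at this
      rw [Matrix.algebraMap_matrix_apply]
      rcases eq_or_ne i j with rfl | hij
      · simpa using this
      · simpa [Pi.single_eq_of_ne hij, hij] using this
  have hlam0 : lam ≠ 0 := by
    intro h0
    have h1 : (Pk d).val * ((Pk d)⁻¹).val = 1 := by
      rw [← Units.val_mul, mul_inv_cancel, Units.val_one]
    rw [hlam, h0, map_zero, Matrix.zero_mul] at h1
    have h2 := congrFun (congrFun h1 ⟨0, hn⟩) ⟨0, hn⟩
    simp [Matrix.one_apply] at h2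
  -- scalar correction
  have he0 : (∑ i ∈ Finset.range d, q ^ i) ≠ 0 := by
    have h1 : (1:ℕ) ≤ ∑ i ∈ Finset.range d, q ^ i := by
      calc (1:ℕ) = q ^ 0 := (pow_zero q).symm
      _ ≤ ∑ i ∈ Finset.range d, q ^ i :=
        Finset.single_le_sum (f := fun i => q ^ i) (fun i _ => Nat.zero_le _)
          (Finset.mem_range.mpr hd)
    omega
  obtain ⟨c, hc⟩ := IsAlgClosed.exists_pow_nat_eq (lam⁻¹) (Nat.pos_of_ne_zero he0)
  have hc0 : c ≠ 0 := by
    intro h0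
    rw [h0, zero_pow he0, eq_comm, inv_eq_zero] at hc
    exact hlam0 hc
  set cu : Kˣ := Units.mk0 c hc0 with hcudef
  set SU : Kˣ →* GL (Fin n) K :=
    Units.map (algebraMap K (Matrix (Fin n) (Fin n) K)).toMonoidHom with hSUdef
  have hSUval : ∀ x : Kˣ, (SU x).val = algebraMap K (Matrix (Fin n) (Fin n) K) (x : K) :=
    fun x => rfl
  have hSUcentral : ∀ (x : Kˣ) (u : GL (Fin n) K), SU x * u = u * SU x := by
    intro x u
    apply Units.ext
    simp only [Units.val_mul, hSUval]
    exact Algebra.commutes _ _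
  have hσSU : ∀ x : Kˣ, σM (SU x) = SU (x ^ q) := by
    intro x
    apply Units.ext
    rw [hσval, hSUval, hSUval]
    ext i j
    simp only [Matrix.map_apply, Matrix.algebraMap_matrix_apply]
    rcases eq_or_ne i j with rfl | hij
    · simp only [if_pos rfl]
      rw [hφ]
      simp [Units.val_pow_eq_pow_val]
    · simp [hij]
  have hσSUk : ∀ (k : ℕ) (x : Kˣ), σM^[k] (SU x) = SU (x ^ q ^ k) := by
    intro k
    induction k with
    | zero => intro x; simp
    | succ k ih =>
      intro x
      rw [Function.iterate_succ_apply, hσSU, ih, ← pow_mul, ← pow_succ']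
  set g : GL (Fin n) K := SU cu * g0 with hgdef
  have hσρ' : ∀ γ : Γ, σM (ρ γ) = g⁻¹ * ρ γ * g := by
    intro γ
    have h2 : (SU cu)⁻¹ * ρ γ * SU cu = ρ γ := by
      rw [mul_assoc, ← hSUcentral cu (ρ γ), ← mul_assoc, inv_mul_cancel, one_mul]
    have h3 : g⁻¹ * ρ γ * g = g0⁻¹ * ((SU cu)⁻¹ * ρ γ * SU cu) * g0 := by
      rw [hgdef, mul_inv_rev]
      group
    rw [h3, h2, hσρ γ]
  -- cocycle product for g
  set Pg : ℕ → GL (Fin n) K :=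
    fun k => Nat.rec (motive := fun _ => GL (Fin n) K) 1 (fun i acc => acc * σM^[i] g) k
    with hPgdef
  have hPg0 : Pg 0 = 1 := rfl
  have hPgS : ∀ k, Pg (k+1) = Pg k * σM^[k] g := fun k => rfl
  have hPgPk : ∀ k, Pg k = SU (cu ^ (∑ i ∈ Finset.range k, q ^ i)) * Pk k := by
    intro k
    induction k with
    | zero => simp [hPg0, hPk0]
    | succ k ih =>
      rw [hPgS, hPkS, ih, hgdef, hitermul, hσSUk]
      calc SU (cu ^ (∑ i ∈ Finset.range k, q ^ i)) * Pk k * (SU (cu ^ q ^ k) * σM^[k] g0)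
          = SU (cu ^ (∑ i ∈ Finset.range k, q ^ i)) * (Pk k * SU (cu ^ q ^ k)) * σM^[k] g0 := by
            group
        _ = SU (cu ^ (∑ i ∈ Finset.range k, q ^ i)) * (SU (cu ^ q ^ k) * Pk k) * σM^[k] g0 := by
            rw [← hSUcentral]
        _ = SU (cu ^ (∑ i ∈ Finset.range k, q ^ i)) * SU (cu ^ q ^ k) * (Pk k * σM^[k] g0) := by
            group
        _ = SU (cu ^ (∑ i ∈ Finset.range (k+1), q ^ i)) * (Pk k * σM^[k] g0) := by
            rw [← map_mul, ← pow_add, Finset.sum_range_succ]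
  have hPgd : Pg d = 1 := by
    have hlamu : Pk d = SU (Units.mk0 lam hlam0) := by
      apply Units.ext
      rw [hSUval, hlam]
      rfl
    rw [hPgPk d, hlamu, ← map_mul]
    have h1 : cu ^ (∑ i ∈ Finset.range d, q ^ i) * Units.mk0 lam hlam0 = 1 := by
      apply Units.ext
      rw [Units.val_mul, Units.val_pow_eq_pow_val, Units.val_one]
      simp only [hcudef, Units.val_mk0]
      rw [hc, inv_mul_cancel₀ hlam0]
    rw [h1, map_one]
  have hkey : ∀ k, g * σM (Pg k) = Pg (k+1) := by
    intro k
    induction k with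
    | zero =>
      rw [hPg0, map_one, mul_one, hPgS 0, hPg0, one_mul]
      rfl
    | succ k ih =>
      calc g * σM (Pg (k+1)) = g * σM (Pg k * σM^[k] g) := by rw [hPgS k]
        _ = g * σM (Pg k) * σM (σM^[k] g) := by
            rw [map_mul]
            exact (mul_assoc _ _ _).symm
        _ = Pg (k+1) * σM^[k+1] g := by rw [ih, Function.iterate_succ_apply']
        _ = Pg (k+1+1) := (hPgS (k+1)).symm
  -- the semilinear map ψ
  set Ginv : Matrix (Fin n) (Fin n) K := (g⁻¹).val with hGinvdef
  set ψ : (Fin n → K) →+ (Fin n → K) :=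
    { toFun := fun r => Matrix.vecMul (fun j => φ (r j)) Ginv
      map_zero' := by
        show Matrix.vecMul (fun j => φ ((0 : Fin n → K) j)) Ginv = 0
        have h1 : (fun j : Fin n => φ ((0 : Fin n → K) j)) = 0 := by
          funext j; simp
        rw [h1, Matrix.zero_vecMul]
      map_add' := by
        intro u v
        show Matrix.vecMul (fun j => φ ((u + v) j)) Ginv
          = Matrix.vecMul (fun j => φ (u j)) Ginv + Matrix.vecMul (fun j => φ (v j)) Ginv
        have h1 : (fun j : Fin n => φ ((u + v) j))
            = (fun j => φ (u j)) + (fun j => φ (v j)) := by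
          funext j; simp [map_add]
        simp only [h1, Matrix.add_vecMul] } with hψdef
  have hψapply : ∀ r, ψ r = Matrix.vecMul (fun j => φ (r j)) Ginv := fun r => rfl
  have hψsmul : ∀ (a : K) (u : Fin n → K), ψ (a • u) = a ^ q • ψ u := by
    intro a u
    rw [hψapply, hψapply]
    have h1 : (fun j => φ ((a • u) j)) = φ a • fun j => φ (u j) := by
      funext j
      simp [map_mul]
    rw [h1, Matrix.smul_vecMul, hφ]
  have hψiter : ∀ (k : ℕ) (r : Fin n → K),
      ψ^[k] r = Matrix.vecMul (fun j => (r j) ^ q ^ k) ((Pg k)⁻¹).val := by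
    intro k
    induction k with
    | zero =>
      intro r
      rw [Function.iterate_zero_apply, hPg0, inv_one, Units.val_one, Matrix.vecMul_one]
      funext j
      simp
    | succ k ih =>
      intro r
      rw [Function.iterate_succ_apply', ih, hψapply]
      have h1 : (fun j => φ ((Matrix.vecMul (fun j => (r j) ^ q ^ k) ((Pg k)⁻¹).val) j))
          = Matrix.vecMul (fun j => (r j) ^ q ^ (k+1)) (((Pg k)⁻¹).val.map φ) := by
        funext j
        rw [RingHom.map_vecMul φ ((Pg k)⁻¹).val (fun j => (r j) ^ q ^ k) j]
        congr 1
        funext i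
        simp only [Function.comp_apply]
        rw [hφ, ← pow_mul, ← pow_succ]
      rw [h1, Matrix.vecMul_vecMul]
      have h2 : ((Pg k)⁻¹).val.map φ = ((σM (Pg k))⁻¹).val := by
        rw [← hσval, map_inv]
      rw [h2]
      have h3 : σM (Pg k) = g⁻¹ * Pg (k+1) := by
        rw [← hkey k]; group
      rw [h3, hGinvdef, ← Units.val_mul]
      rw [mul_inv_rev, inv_inv]
      group
  have hψd : ∀ r : Fin n → K, ψ^[d] r = fun j => (r j) ^ q ^ d := by
    intro r
    rw [hψiter d, hPgd, inv_one, Units.val_one, Matrix.vecMul_one]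
  -- the root finset
  set f : K[X] := X ^ q ^ d - X with hfdef
  have hfdeg : f.natDegree = q ^ d :=
    FiniteField.X_pow_card_sub_X_natDegree_eq K (Nat.one_lt_pow (by omega) (by omega))
  have hfsep : f.Separable := by
    refine galois_poly_separable p (q ^ d) ?_
    exact dvd_trans (by rw [hq]; exact dvd_pow_self p (by omega)) (dvd_pow_self q (by omega))
  have hf0 : f ≠ 0 := by
    intro h0
    have h1 : (0:ℕ) < q ^ d := pow_pos (by omega) d
    rw [h0, Polynomial.natDegree_zero] at hfdeg
    omega
  set s : Finset K := (f.rootSet K).toFinset with hsdef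
  have hscard : s.card = q ^ d := by
    rw [hsdef, Set.toFinset_card,
      card_rootSet_eq_natDegree hfsep (IsAlgClosed.splits _), hfdeg]
  have hsmem : ∀ c' ∈ s, c' ^ q ^ d = c' := by
    intro c' hcs
    rw [hsdef, Set.mem_toFinset, Polynomial.mem_rootSet] at hcs
    have h1 := hcs.2
    rw [hfdef] at h1
    simp only [map_sub, map_pow, Polynomial.aeval_X, sub_eq_zero] at h1
    exact h1
  -- the fixed points span everything
  have hspan1 : ∀ v : Fin n → K, ψ^[d] v = v → v ∈ Submodule.span K {r : Fin n → K | ψ r = r} :=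
    fun v hv => span_fix K n d q hd hq2 s hsmem (le_of_eq hscard.symm) ψ hψsmul v hv
  have hsingle : ∀ j : Fin n, (Pi.single j (1:K) : Fin n → K)
      ∈ Submodule.span K {r : Fin n → K | ψ r = r} := by
    intro j
    refine hspan1 _ ?_
    rw [hψd]
    funext i
    rcases eq_or_ne i j with rfl | hij
    · simp
    · simp [Pi.single_eq_of_ne hij, zero_pow (pow_ne_zero d (by omega : q ≠ 0))]
  have hspantop : Submodule.span K {r : Fin n → K | ψ r = r} = ⊤ := by
    rw [Submodule.eq_top_iff']
    intro v
    have hv : v = ∑ j : Fin n, v j • (Pi.single j (1:K) : Fin n → K) := by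
      funext i
      rw [Finset.sum_apply]
      simp [Pi.single_apply]
    rw [hv]
    exact Submodule.sum_mem _ fun j _ => Submodule.smul_mem _ _ (hsingle j)
  -- extract a basis of fixed vectors
  obtain ⟨b, hbsub, hbspan, hbind⟩ := exists_linearIndependent K {r : Fin n → K | ψ r = r}
  rw [hspantop] at hbspan
  set B : Module.Basis b K (Fin n → K) := Module.Basis.mk hbind (by rw [Subtype.range_coe, hbspan]) with hBdef
  haveI : Fintype b := FiniteDimensional.fintypeBasisIndex B
  have hcardb : Fintype.card b = n := by
    have h1 := Module.finrank_eq_card_basis B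
    rw [Module.finrank_fin_fun] at h1
    omega
  set eqv : Fin n ≃ b := (Fintype.equivFinOfCardEq hcardb).symm with heqvdef
  set w : Fin n → (Fin n → K) := fun i => ((eqv i : b) : Fin n → K) with hwdef
  have hwfix : ∀ i, ψ (w i) = w i := fun i => hbsub (eqv i).2
  set Bb : Module.Basis (Fin n) K (Fin n → K) := B.reindex eqv.symm with hBbdef
  have hBb : ∀ i, Bb i = w i := by
    intro i
    rw [hBbdef, Module.Basis.reindex_apply, Equiv.symm_symm, hBdef, Module.Basis.coe_mk]
  set E : Module.Basis (Fin n) K (Fin n → K) := Pi.basisFun K (Fin n) with hEdef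
  set M : Matrix (Fin n) (Fin n) K := E.toMatrix (⇑Bb) with hMdef
  haveI : Invertible M := E.invertibleToMatrix Bb
  haveI : Invertible Mᵀ := Matrix.invertibleTranspose M
  set hU : GL (Fin n) K := unitOfInvertible Mᵀ with hUdef
  have hUval : hU.val = Mᵀ := rfl
  have hMT : ∀ i, Mᵀ i = w i := by
    intro i
    funext j
    rw [Matrix.transpose_apply, hMdef, Module.Basis.toMatrix_apply, hEdef, Pi.basisFun_repr, hBb]
  -- the rows are fixed: σ(h) = h * g
  have hσh : σM hU = hU * g := by
    apply Units.ext
    rw [hσval, Units.val_mul, hUval]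
    ext i j
    have h1 : Matrix.vecMul (fun j => φ (w i j)) Ginv = w i := hwfix i
    have h2 : (fun j => φ (w i j)) = Matrix.vecMul (w i) g.val := by
      have h3 := congrArg (fun v => Matrix.vecMul v g.val) h1
      rw [Matrix.vecMul_vecMul, hGinvdef, ← Units.val_mul, inv_mul_cancel, Units.val_one,
        Matrix.vecMul_one] at h3
      exact h3
    rw [Matrix.map_apply, Matrix.mul_apply_eq_vecMul, hMT i]
    exact congrFun h2 j
  -- conclusion
  refine ⟨hU, fun γ i j => ?_⟩
  have hτ : σM (hU * ρ γ * hU⁻¹) = hU * ρ γ * hU⁻¹ := by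
    rw [map_mul, map_mul, map_inv, hσh, hσρ' γ]
    group
  have h5 := congrArg (fun u : GL (Fin n) K => u.val i j) hτ
  rw [hσval, Matrix.map_apply, hφ] at h5
  exact h5
end

section
/- Let G be a finite group and χ the character of an irreducible complex representation of G. Then (1/|G|²) · Σ_{x,y ∈ G} χ(x y x⁻¹ y⁻¹) = 1/χ(1). -/
open CategoryTheory Module

namespace Stmt6Aux

variable {G : Type} [Group G] [Fintype G] (V : FDRep ℂ G)

theorem Tcomm (y g : G) :
    (∑ x : G, V.ρ (x * y * x⁻¹)) ∘ₗ V.ρ g = V.ρ g ∘ₗ ∑ x : G, V.ρ (x * y * x⁻¹) := by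
  simp only [← Module.End.mul_eq_comp, Finset.sum_mul, Finset.mul_sum, ← map_mul]
  refine Fintype.sum_equiv (Equiv.mulLeft g⁻¹) _ _ (fun x => ?_)
  simp only [Equiv.coe_mulLeft]
  congr 1
  group

noncomputable def Tmor (y : G) : V ⟶ V where
  hom := FGModuleCat.ofHom (∑ x : G, V.ρ (x * y * x⁻¹))
  comm := fun g => by ext1; exact Tcomm V y g

theorem key (y : G) [Simple V] :
    (∑ x : G, V.character (x * y * x⁻¹ * y⁻¹)) * V.character 1 =
      (Fintype.card G : ℂ) * V.character y * V.character y⁻¹ := by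
  obtain ⟨c, hc⟩ := endomorphism_simple_eq_smul_id ℂ (Tmor V y)
  have hc' : (∑ x : G, V.ρ (x * y * x⁻¹)) = c • (1 : V →ₗ[ℂ] V) := by
    have h := congrArg (fun f => f.hom.hom.hom) hc.symm
    exact h
  have h1 : (Fintype.card G : ℂ) * V.character y = c * V.character 1 := by
    have h := congrArg (LinearMap.trace ℂ V) hc'
    rw [map_sum, LinearMap.map_smul, LinearMap.trace_one] at h
    rw [FDRep.char_one]
    calc (Fintype.card G : ℂ) * V.character y
        = ∑ x : G, V.character (x * y * x⁻¹) := by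
          simp [FDRep.char_conj, Finset.sum_const, mul_comm]
      _ = c * (finrank ℂ V : ℂ) := by rw [← smul_eq_mul, ← h]; rfl
  have h2 : (∑ x : G, V.character (x * y * x⁻¹ * y⁻¹)) = c * V.character y⁻¹ := by
    calc (∑ x : G, V.character (x * y * x⁻¹ * y⁻¹))
        = LinearMap.trace ℂ V ((∑ x : G, V.ρ (x * y * x⁻¹)) * V.ρ y⁻¹) := by
          rw [Finset.sum_mul, map_sum]
          refine Finset.sum_congr rfl (fun x _ => ?_)
          rw [FDRep.character, ← map_mul]
      _ = c * V.character y⁻¹ := by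
          rw [hc', smul_mul_assoc, one_mul, LinearMap.map_smul, smul_eq_mul, FDRep.character]
  rw [h2, mul_comm c, mul_assoc, ← h1]
  ring


theorem horth_aux (G : GrpCat.{0}) [Fintype G] (V : FDRep ℂ G) [Simple V]
    (hn : (Fintype.card G : ℂ) ≠ 0) :
    ∑ g : G, V.character g * V.character g⁻¹ = (Fintype.card G : ℂ) := by
  haveI : Invertible ((Fintype.card G : ℂ)) := invertibleOfNonzero hn
  have h := FDRep.char_orthonormal V V
  rw [if_pos ⟨Iso.refl V⟩, Nat.card_eq_fintype_card] at h
  have h2 := congrArg (fun z => (Fintype.card G : ℂ) * z) h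
  simp only [smul_eq_mul, ← mul_assoc, mul_invOf_self, mul_inv_cancel₀ hn, one_mul, mul_one, Nat.cast_one] at h2
  exact h2

end Stmt6Aux

/-- Let `G` be a finite group and `χ` the character of an irreducible complex
representation of `G`. Then `(1/|G|²) · Σ_{x,y ∈ G} χ(x y x⁻¹ y⁻¹) = 1/χ(1)`. -/
theorem stmt6 (G : Type) [Group G] [Fintype G] (V : FDRep ℂ G) (hV : Simple V) :
    (1 / (Fintype.card G : ℂ) ^ 2) *
        ∑ x : G, ∑ y : G, V.character (x * y * x⁻¹ * y⁻¹) = 1 / V.character 1 := by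
  haveI := hV
  have hn : (Fintype.card G : ℂ) ≠ 0 := by
    exact_mod_cast (Fintype.card_ne_zero : Fintype.card G ≠ 0)
  haveI : Invertible (Fintype.card G : ℂ) := invertibleOfNonzero hn
  have horth : ∑ g : G, V.character g * V.character g⁻¹ = (Fintype.card G : ℂ) :=
    @Stmt6Aux.horth_aux (GrpCat.of G) ‹Fintype G› V hV
      (by exact_mod_cast (Fintype.card_ne_zero : Fintype.card G ≠ 0))
  have hchi : V.character 1 ≠ 0 := by
    rw [FDRep.char_one]
    have : finrank ℂ V ≠ 0 := by
      intro h0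
      haveI : Subsingleton V := by
        rw [finrank_zero_iff] at h0; infer_instance
      apply CategoryTheory.id_nonzero V
      apply Action.hom_ext
      apply FGModuleCat.hom_ext
      apply LinearMap.ext
      intro v
      exact Subsingleton.elim (α := V) _ _
    exact_mod_cast this
  have hsum : (∑ x : G, ∑ y : G, V.character (x * y * x⁻¹ * y⁻¹)) * V.character 1 =
      (Fintype.card G : ℂ) ^ 2 := by
    rw [Finset.sum_comm, Finset.sum_mul]
    calc (∑ y : G, (∑ x : G, V.character (x * y * x⁻¹ * y⁻¹)) * V.character 1)
        = ∑ y : G, (Fintype.card G : ℂ) * V.character y * V.character y⁻¹ := by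
          exact Finset.sum_congr rfl (fun y _ => Stmt6Aux.key V y)
      _ = (Fintype.card G : ℂ) * ∑ y : G, V.character y * V.character y⁻¹ := by
          rw [Finset.mul_sum]; exact Finset.sum_congr rfl (fun y _ => by ring)
      _ = (Fintype.card G : ℂ) ^ 2 := by rw [horth]; ring
  have hn2 : (Fintype.card G : ℂ) ^ 2 ≠ 0 := pow_ne_zero _ hn
  rw [div_mul_eq_mul_div, one_mul, div_eq_div_iff hn2 hchi]
  linear_combination hsum
end

section
/- Let Γ = ⟨x, y | x^a = y^b⟩ with a, b coprime positive integers, q a prime power with q ≡ 1 (mod ab), and A: Γ → 𝔽_q^× a one-dimensional representation. Then dim H¹(Γ, A) equals 1 if A is trivial; equals 1 if A(x^a) = A(y^b) = 1 with A(x) ≠ 1 and A(y) ≠ 1; and equals 0 otherwise. -/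
open scoped Classical

/-- The torus-knot group `Γ = ⟨x, y | x^a = y^b⟩`, with `x = PresentedGroup.of true` and
`y = PresentedGroup.of false`. -/
def torusKnotGroup (a b : ℕ) : Type :=
  PresentedGroup ({FreeGroup.of true ^ a * (FreeGroup.of false ^ b)⁻¹} : Set (FreeGroup Bool))

instance (a b : ℕ) : Group (torusKnotGroup a b) :=
  inferInstanceAs (Group (PresentedGroup _))

/-- The one-dimensional representation of `Γ` over `F` associated to a homomorphism
`χ : Γ → F^×`. -/
def repOfChar {Γ F : Type} [Group Γ] [Field F] (χ : Γ →* Fˣ) : Representation F Γ F :=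
  (Units.coeHom (Module.End F F)).comp ((Units.map (Algebra.lmul F F).toMonoidHom).comp χ)

namespace Stmt13Aux

open groupCohomology Finset Module

section Shim

variable {k G : Type} [CommRing k] [Group G]

/-- The 1-cocycles. -/
abbrev oneCocycles (A : Rep k G) : Submodule k (G → A) := cocycles₁ A

theorem mem_oneCocycles_iff {A : Rep k G} (f : G → A) :
    f ∈ oneCocycles A ↔ ∀ g h : G, f (g * h) = A.ρ g (f h) + f g :=
  mem_cocycles₁_iff f

theorem oneCocycles_map_one {A : Rep k G} (f : oneCocycles A) : f 1 = 0 :=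
  cocycles₁_map_one f

theorem oneCocycles_map_inv {A : Rep k G} (f : oneCocycles A) (g : G) :
    A.ρ g (f g⁻¹) = -f g :=
  cocycles₁_map_inv f g

/-- The 1-coboundaries, as a submodule of the 1-cocycles. -/
def oneCoboundaries (A : Rep k G) : Submodule k (oneCocycles A) :=
  LinearMap.range (shortComplexH1 A).moduleCatToCycles

theorem mem_oneCoboundaries_iff {A : Rep k G} (f : oneCocycles A) :
    f ∈ oneCoboundaries A ↔ ∃ x : A, ∀ g : G, A.ρ g x - x = f g := by
  constructor
  · rintro ⟨x, rfl⟩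
    exact ⟨x, fun g => rfl⟩
  · rintro ⟨x, hx⟩
    exact ⟨x, Subtype.ext (funext fun g => hx g)⟩

/-- A coboundary built from an element. -/
def oneCoboundariesOfEq {A : Rep k G} {f : G → A} {x : A} (h : ∀ g : G, A.ρ g x - x = f g) :
    oneCoboundaries A :=
  ⟨⟨f, (mem_oneCocycles_iff f).2 fun g g' => by
      rw [← h, ← h, ← h, map_sub, Rep.ρ_mul]; simp⟩,
    (mem_oneCoboundaries_iff _).2 ⟨x, h⟩⟩

theorem oneCoboundariesOfEq_apply {A : Rep k G} {f : G → A} {x : A}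
    (h : ∀ g : G, A.ρ g x - x = f g) : ((oneCoboundariesOfEq h).1 : G → A) = f := rfl

theorem finrank_H1_eq (A : Rep k G) :
    finrank k (H1 A) = finrank k (oneCocycles A ⧸ oneCoboundaries A) :=
  (H1Iso A).toLinearEquiv.finrank_eq

end Shim

variable {Γ F : Type} [Group Γ] [Field F]

lemma rho_apply (χ : Γ →* Fˣ) (g : Γ) (m : F) :
    (Rep.of (repOfChar χ)).ρ g m = (χ g : F) * m := rfl

/-- The values of a cocycle, as elements of `F`. -/
def val {χ : Γ →* Fˣ} (f : oneCocycles (Rep.of (repOfChar χ))) : Γ → F := f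

lemma cocycle_mul {χ : Γ →* Fˣ} (f : oneCocycles (Rep.of (repOfChar χ))) (g h : Γ) :
    val f (g * h) = (χ g : F) * val f h + val f g :=
  (mem_oneCocycles_iff ((f : Γ → _))).1 f.2 g h

lemma cocycle_one {χ : Γ →* Fˣ} (f : oneCocycles (Rep.of (repOfChar χ))) :
    val f 1 = 0 := oneCocycles_map_one f

lemma cocycle_inv {χ : Γ →* Fˣ} (f : oneCocycles (Rep.of (repOfChar χ))) (g : Γ) :
    (χ g : F) * val f g⁻¹ = - val f g := oneCocycles_map_inv f g

lemma cocycle_pow {χ : Γ →* Fˣ} (f : oneCocycles (Rep.of (repOfChar χ))) (g : Γ) (n : ℕ) :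
    val f (g ^ n) = (∑ i ∈ range n, (χ g : F) ^ i) * val f g := by
  induction n with
  | zero => simpa using cocycle_one f
  | succ n ih =>
      rw [pow_succ, cocycle_mul, ih, sum_range_succ]
      rw [map_pow]
      push_cast
      ring

/-- The subgroup where a cocycle vanishes. -/
def vanishSub {χ : Γ →* Fˣ} (f : oneCocycles (Rep.of (repOfChar χ))) : Subgroup Γ where
  carrier := {g | val f g = 0}
  one_mem' := cocycle_one f
  mul_mem' := by
    intro g h hg hh
    simp only [Set.mem_setOf_eq] at *
    rw [cocycle_mul, hg, hh, mul_zero, zero_add]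
  inv_mem' := by
    intro g hg
    simp only [Set.mem_setOf_eq] at *
    have h := cocycle_inv f g
    rw [hg, neg_zero] at h
    exact (mul_eq_zero.1 h).resolve_left (Units.ne_zero _)

/-- The action of `Fˣ` on `Multiplicative F` by multiplication. -/
def phiAct (F : Type) [Field F] : Fˣ →* MulAut (Multiplicative F) where
  toFun u := AddEquiv.toMultiplicative (DistribMulAction.toAddAut Fˣ F u)
  map_one' := by ext m; simp
  map_mul' u v := by ext m; simp [mul_smul]

lemma phiAct_apply (u : Fˣ) (z : F) :
    phiAct F u (Multiplicative.ofAdd z) = Multiplicative.ofAdd ((u : F) * z) := by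
  simp [phiAct, Units.smul_def]

lemma phiAct_toAdd (u : Fˣ) (m : Multiplicative F) :
    Multiplicative.toAdd (phiAct F u m) = (u : F) * Multiplicative.toAdd m := by
  simp [phiAct, Units.smul_def]

lemma sd_pow (z : F) (u : Fˣ) (n : ℕ) :
    (⟨Multiplicative.ofAdd z, u⟩ : Multiplicative F ⋊[phiAct F] Fˣ) ^ n =
      ⟨Multiplicative.ofAdd ((∑ i ∈ range n, (u : F) ^ i) * z), u ^ n⟩ := by
  induction n with
  | zero => rw [pow_zero]; ext <;> simp
  | succ n ih =>
      rw [pow_succ, ih, SemidirectProduct.mul_def]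
      congr 1
      · show Multiplicative.ofAdd _ * phiAct F (u ^ n) (Multiplicative.ofAdd z) = _
        rw [phiAct_apply]
        rw [← ofAdd_add, sum_range_succ]
        congr 1
        push_cast
        ring
      · rw [pow_succ]

lemma tkg_rel (a b : ℕ) :
    (PresentedGroup.of true : torusKnotGroup a b) ^ a = PresentedGroup.of false ^ b := by
  set rels : Set (FreeGroup Bool) :=
    {FreeGroup.of true ^ a * (FreeGroup.of false ^ b)⁻¹} with hrels
  let π : FreeGroup Bool →* PresentedGroup rels := QuotientGroup.mk' (Subgroup.normalClosure rels)
  have h1 : π (FreeGroup.of true ^ a * (FreeGroup.of false ^ b)⁻¹) = 1 :=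
    (QuotientGroup.eq_one_iff _).2 (Subgroup.subset_normalClosure rfl)
  rw [map_mul, map_inv, map_pow, map_pow, mul_inv_eq_one] at h1
  exact h1

/-- Homomorphisms out of the torus knot group agreeing on the two generators are equal. -/
lemma tkg_hom_ext {a b : ℕ} {H : Type*} [Group H] {φ ψ : torusKnotGroup a b →* H}
    (h1 : φ (PresentedGroup.of true) = ψ (PresentedGroup.of true))
    (h2 : φ (PresentedGroup.of false) = ψ (PresentedGroup.of false)) : φ = ψ :=
  PresentedGroup.ext fun x => by cases x <;> assumption

/-- A subgroup of the torus knot group containing both generators is everything. -/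
lemma tkg_generates {a b : ℕ} {S : Subgroup (torusKnotGroup a b)}
    (h1 : PresentedGroup.of true ∈ S) (h2 : PresentedGroup.of false ∈ S) : S = ⊤ := by
  have hcl : Subgroup.closure (G := torusKnotGroup a b)
      (Set.range (α := torusKnotGroup a b) PresentedGroup.of) = ⊤ :=
    PresentedGroup.closure_range_of _
  rw [← top_le_iff, ← hcl, Subgroup.closure_le]
  rintro x ⟨t, rfl⟩
  cases t <;> assumption

section TKG

variable {a b : ℕ} (χ : torusKnotGroup a b →* Fˣ)

local notation "x" => (PresentedGroup.of true : torusKnotGroup a b)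
local notation "y" => (PresentedGroup.of false : torusKnotGroup a b)

/-- Construction of a cocycle with prescribed values on the generators. -/
lemma exists_cocycle (α β : F)
    (h : (∑ i ∈ range a, (χ x : F) ^ i) * α = (∑ i ∈ range b, (χ y : F) ^ i) * β) :
    ∃ f : oneCocycles (Rep.of (repOfChar χ)), val f x = α ∧ val f y = β := by
  set G := Multiplicative F ⋊[phiAct F] Fˣ
  set fgen : Bool → G :=
    fun t => if t then ⟨Multiplicative.ofAdd α, χ x⟩ else ⟨Multiplicative.ofAdd β, χ y⟩ with hfgen
  have huv : (χ x) ^ a = (χ y) ^ b := by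
    exact (map_pow χ _ a).symm.trans ((congrArg χ (tkg_rel a b)).trans (map_pow χ _ b))
  have hrels : ∀ r ∈ ({FreeGroup.of true ^ a * (FreeGroup.of false ^ b)⁻¹} :
      Set (FreeGroup Bool)), FreeGroup.lift fgen r = 1 := by
    rintro r hr
    rw [Set.mem_singleton_iff] at hr
    subst hr
    rw [map_mul, map_inv, map_pow, map_pow, FreeGroup.lift_apply_of, FreeGroup.lift_apply_of, mul_inv_eq_one]
    show (⟨Multiplicative.ofAdd α, χ x⟩ : G) ^ a = (⟨Multiplicative.ofAdd β, χ y⟩ : G) ^ b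
    rw [sd_pow, sd_pow, h, huv]
  set Φ : torusKnotGroup a b →* G := PresentedGroup.toGroup hrels with hΦ
  have hΦof : ∀ t : Bool, Φ (PresentedGroup.of t) = fgen t :=
    fun t => PresentedGroup.toGroup.of hrels
  have hright : ∀ g, (Φ g).right = χ g := by
    have : SemidirectProduct.rightHom.comp Φ = χ := by
      apply tkg_hom_ext
      · exact congrArg SemidirectProduct.right (hΦof true)
      · exact congrArg SemidirectProduct.right (hΦof false)
    exact fun g => DFunLike.congr_fun this g
  set f : torusKnotGroup a b → F := fun g => Multiplicative.toAdd (Φ g).left with hF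
  have hcoc : f ∈ oneCocycles (Rep.of (repOfChar χ)) := by
    rw [mem_oneCocycles_iff]
    intro g h'
    show Multiplicative.toAdd (Φ (g * h')).left = (χ g : F) * Multiplicative.toAdd (Φ h').left
      + Multiplicative.toAdd (Φ g).left
    rw [map_mul, SemidirectProduct.mul_left, toAdd_mul, phiAct_toAdd, hright]
    ring
  refine ⟨⟨f, hcoc⟩, ?_, ?_⟩
  · show Multiplicative.toAdd (Φ x).left = α
    rw [hΦof]; rfl
  · show Multiplicative.toAdd (Φ y).left = β
    rw [hΦof]; rfl

/-- Evaluation of cocycles at the two generators. -/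
def ev : oneCocycles (Rep.of (repOfChar χ)) →ₗ[F] F × F where
  toFun f := (val f x, val f y)
  map_add' f g := rfl
  map_smul' c f := rfl

lemma ev_injective : Function.Injective (ev χ) := by
  intro f g hfg
  have hd : ev χ (f - g) = 0 := by rw [map_sub, hfg, sub_self]
  have hx : val (f - g) x = 0 := congrArg Prod.fst hd
  have hy : val (f - g) y = 0 := congrArg Prod.snd hd
  have htop : vanishSub (f - g) = ⊤ := tkg_generates hx hy
  have : ∀ g', val (f - g) g' = 0 := fun g' => by
    have : g' ∈ vanishSub (f - g) := htop ▸ Subgroup.mem_top g'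
    exact this
  have hfg0 : f - g = 0 := by
    apply Subtype.ext
    funext g'
    exact this g'
  rwa [sub_eq_zero] at hfg0

end TKG

/-- The linear functional cutting out the cocycle condition. -/
def ellMap (sa sb : F) : (F × F) →ₗ[F] F where
  toFun p := sa * p.1 - sb * p.2
  map_add' p q := by simp only [Prod.fst_add, Prod.snd_add]; ring
  map_smul' c p := by simp only [Prod.smul_fst, Prod.smul_snd, smul_eq_mul, RingHom.id_apply]; ring

/-- The linear map whose range corresponds to the coboundaries. -/
def dMap (u' v' : F) : F →ₗ[F] F × F where
  toFun z := ((u' - 1) * z, (v' - 1) * z)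
  map_add' p q := by simp only [Prod.mk_add_mk, Prod.mk.injEq]; constructor <;> ring
  map_smul' c p := by
    simp only [smul_eq_mul, RingHom.id_apply, Prod.smul_mk, Prod.mk.injEq]
    constructor <;> ring

section TKG2

variable {a b : ℕ} (χ : torusKnotGroup a b →* Fˣ)

local notation "x" => (PresentedGroup.of true : torusKnotGroup a b)
local notation "y" => (PresentedGroup.of false : torusKnotGroup a b)

lemma ev_range : LinearMap.range (ev χ) =
    LinearMap.ker (ellMap (∑ i ∈ range a, (χ x : F) ^ i) (∑ i ∈ range b, (χ y : F) ^ i)) := by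
  ext p
  constructor
  · rintro ⟨f, rfl⟩
    rw [LinearMap.mem_ker]
    show (∑ i ∈ range a, (χ x : F) ^ i) * val f x - (∑ i ∈ range b, (χ y : F) ^ i) * val f y = 0
    exact sub_eq_zero.2 ((cocycle_pow f x a).symm.trans
      ((congrArg (val f) (tkg_rel a b)).trans (cocycle_pow f y b)))
  · intro hp
    rw [LinearMap.mem_ker] at hp
    have hp0 : (∑ i ∈ range a, (χ x : F) ^ i) * p.1
        - (∑ i ∈ range b, (χ y : F) ^ i) * p.2 = 0 := hp
    have hp' : (∑ i ∈ range a, (χ x : F) ^ i) * p.1 = (∑ i ∈ range b, (χ y : F) ^ i) * p.2 :=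
      sub_eq_zero.1 hp0
    obtain ⟨f, hfx, hfy⟩ := exists_cocycle χ p.1 p.2 hp'
    exact ⟨f, Prod.ext hfx hfy⟩

lemma ev_map_coboundaries :
    Submodule.map (ev χ) (oneCoboundaries (Rep.of (repOfChar χ))) =
      LinearMap.range (dMap (χ x : F) (χ y : F)) := by
  ext p
  constructor
  · rintro ⟨f, hf, rfl⟩
    obtain ⟨z, hz⟩ := (mem_oneCoboundaries_iff f).1 hf
    let zF : F := z
    have hz' : ∀ g : torusKnotGroup a b, (χ g : F) * zF - zF = val f g := hz
    refine ⟨zF, ?_⟩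
    have hzx : ((χ x : F) - 1) * zF = val f x := by rw [← hz' x]; ring
    have hzy : ((χ y : F) - 1) * zF = val f y := by rw [← hz' y]; ring
    exact Prod.ext hzx hzy
  · rintro ⟨z, rfl⟩
    let z' : (Rep.of (repOfChar χ)) := z
    have hfun : ∀ g : torusKnotGroup a b,
        (Rep.of (repOfChar χ)).ρ g z' - z' = (fun g : torusKnotGroup a b => (χ g : F) * z - z) g :=
      fun g => rfl
    set c := oneCoboundariesOfEq hfun with hc
    refine ⟨c.1, c.2, ?_⟩
    have hcv : ∀ g : torusKnotGroup a b, val c.1 g = (χ g : F) * z - z :=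
      fun g => congrFun (oneCoboundariesOfEq_apply hfun) g
    show ((val c.1 x, val c.1 y) : F × F) = ((((χ x : F) - 1) * z, ((χ y : F) - 1) * z) : F × F)
    exact Prod.ext ((hcv x).trans (by ring)) ((hcv y).trans (by ring))

end TKG2

lemma submodule_F_eq_top {p : Submodule F F} (h : p ≠ ⊥) : p = ⊤ := by
  obtain ⟨z, hz, hz0⟩ := Submodule.exists_mem_ne_zero_of_ne_bot h
  rw [eq_top_iff]
  intro w _
  have : w = (w * z⁻¹) • z := by rw [smul_eq_mul, mul_assoc, inv_mul_cancel₀ hz0, mul_one]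
  rw [this]
  exact p.smul_mem _ hz

lemma finrank_ker_ell (sa sb : F) :
    finrank F (LinearMap.ker (ellMap sa sb)) = if sa = 0 ∧ sb = 0 then 2 else 1 := by
  split_ifs with h
  · obtain ⟨rfl, rfl⟩ := h
    have : LinearMap.ker (ellMap (0:F) 0) = ⊤ := by
      rw [LinearMap.ker_eq_top]
      apply LinearMap.ext
      intro p
      simp [ellMap]
    rw [this, finrank_top, finrank_prod, finrank_self]
  · have hne : ellMap sa sb ≠ 0 := by
      intro h0
      apply h
      constructor
      · have := DFunLike.congr_fun h0 ((1:F), (0:F)); simpa [ellMap] using this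
      · have := DFunLike.congr_fun h0 ((0:F), (1:F)); simpa [ellMap] using this
    have hrange : LinearMap.range (ellMap sa sb) = ⊤ := by
      apply submodule_F_eq_top
      rw [Ne, LinearMap.range_eq_bot]
      exact hne
    have := LinearMap.finrank_range_add_finrank_ker (ellMap sa sb)
    rw [hrange, finrank_top, finrank_self, finrank_prod, finrank_self] at this
    omega

lemma finrank_range_dMap (u' v' : F) :
    finrank F (LinearMap.range (dMap u' v')) = if u' = 1 ∧ v' = 1 then 0 else 1 := by
  split_ifs with h
  · obtain ⟨rfl, rfl⟩ := h
    have : LinearMap.range (dMap (1:F) 1) = ⊥ := by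
      rw [LinearMap.range_eq_bot]
      apply LinearMap.ext
      intro z
      simp [dMap]
    rw [this, finrank_bot]
  · have hker : LinearMap.ker (dMap u' v') = ⊥ := by
      rw [LinearMap.ker_eq_bot']
      intro z hz
      rw [Prod.ext_iff] at hz
      obtain ⟨h1, h2⟩ := hz
      by_contra hz0
      have h1' : (u' - 1 = 0) ∨ z = 0 := mul_eq_zero.1 h1
      have h2' : (v' - 1 = 0) ∨ z = 0 := mul_eq_zero.1 h2
      exact h ⟨sub_eq_zero.1 (h1'.resolve_right hz0), sub_eq_zero.1 (h2'.resolve_right hz0)⟩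
    have := LinearMap.finrank_range_add_finrank_ker (dMap u' v')
    rw [hker, finrank_bot, finrank_self] at this
    omega

end Stmt13Aux

open Stmt13Aux groupCohomology Finset Module in
/-- Let `Γ = ⟨x, y | x^a = y^b⟩` with `a, b` coprime positive integers, `q` a
prime power with `q ≡ 1 (mod ab)`, and `A : Γ → 𝔽_q^×` a one-dimensional representation.
Then `dim H¹(Γ, A)` equals `1` if `A` is trivial; equals `1` if `A(x^a) = A(y^b) = 1` with
`A(x) ≠ 1` and `A(y) ≠ 1`; and equals `0` otherwise. -/
theorem stmt13 (a b : ℕ) (ha : 0 < a) (hb : 0 < b) (hab : Nat.Coprime a b)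
    (F : Type) [Field F] [Fintype F] (hq : Fintype.card F ≡ 1 [MOD a * b])
    (A : torusKnotGroup a b →* Fˣ) :
    Module.finrank F (groupCohomology.H1 (Rep.of (repOfChar A))) =
      if A = 1 then 1
      else if A (PresentedGroup.of true) ^ a = 1 ∧ A (PresentedGroup.of false) ^ b = 1 ∧
          A (PresentedGroup.of true) ≠ 1 ∧ A (PresentedGroup.of false) ≠ 1 then 1
      else 0 := by
  classical
  set x : torusKnotGroup a b := PresentedGroup.of true with hx
  set y : torusKnotGroup a b := PresentedGroup.of false with hy
  set u : Fˣ := A x with hu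
  set v : Fˣ := A y with hv
  set sa : F := ∑ i ∈ range a, (u : F) ^ i with hsa
  set sb : F := ∑ i ∈ range b, (v : F) ^ i with hsb
  -- characteristic facts
  have hcard1 : 1 ≤ Fintype.card F := Fintype.card_pos
  have hdvd : a * b ∣ Fintype.card F - 1 := (Nat.modEq_iff_dvd' hcard1).1 hq.symm
  have hcast : ∀ n : ℕ, n ∣ a * b → (n : F) ≠ 0 := by
    intro n hn h0
    set p := ringChar F with hp
    haveI : CharP F p := ringChar.charP F
    obtain ⟨m, hpprime, hcard⟩ := FiniteField.card F p
    have hpn : p ∣ n := (CharP.cast_eq_zero_iff F p n).1 h0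
    have hpq : p ∣ Fintype.card F := hcard ▸ dvd_pow_self p m.ne_zero
    have hpq1 : p ∣ Fintype.card F - 1 := hpn.trans (hn.trans hdvd)
    have : p ∣ 1 := by
      have := Nat.dvd_sub hpq hpq1
      rwa [Nat.sub_sub_self hcard1] at this
    exact hpprime.ne_one (Nat.dvd_one.mp this)
  have haF : (a : F) ≠ 0 := hcast a ⟨b, rfl⟩
  have hbF : (b : F) ≠ 0 := hcast b ⟨a, mul_comm a b⟩
  -- geometric sum facts
  have hgeo : ∀ (w : Fˣ) (n : ℕ), (∑ i ∈ range n, (w : F) ^ i) * ((w : F) - 1)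
      = (w : F) ^ n - 1 := fun w n => geom_sum_mul _ n
  have hsum_one : ∀ n : ℕ, (∑ i ∈ range n, (1 : F) ^ i) = (n : F) := by
    intro n; simp
  have hsa_iff : sa = 0 ↔ ((u : F) ^ a = 1 ∧ (u : F) ≠ 1) := by
    constructor
    · intro h0
      have hu1 : (u : F) ≠ 1 := by
        intro h1
        rw [hsa, h1, hsum_one] at h0
        exact haF h0
      refine ⟨?_, hu1⟩
      have := hgeo u a
      rw [← hsa, h0, zero_mul] at this
      exact (sub_eq_zero.1 this.symm)
    · rintro ⟨h1, h2⟩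
      have := hgeo u a
      rw [← hsa, h1, sub_self] at this
      rcases mul_eq_zero.1 this with h | h
      · exact h
      · exact absurd (sub_eq_zero.1 h) h2
  have hsb_iff : sb = 0 ↔ ((v : F) ^ b = 1 ∧ (v : F) ≠ 1) := by
    constructor
    · intro h0
      have hv1 : (v : F) ≠ 1 := by
        intro h1
        rw [hsb, h1, hsum_one] at h0
        exact hbF h0
      refine ⟨?_, hv1⟩
      have := hgeo v b
      rw [← hsb, h0, zero_mul] at this
      exact (sub_eq_zero.1 this.symm)
    · rintro ⟨h1, h2⟩
      have := hgeo v b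
      rw [← hsb, h1, sub_self] at this
      rcases mul_eq_zero.1 this with h | h
      · exact h
      · exact absurd (sub_eq_zero.1 h) h2
  -- triviality criterion
  have hA1 : A = 1 ↔ (u = 1 ∧ v = 1) := by
    constructor
    · intro h; rw [hu, hv, h]; exact ⟨rfl, rfl⟩
    · rintro ⟨h1, h2⟩
      exact tkg_hom_ext (by simpa [← hx, ← hu] using h1) (by simpa [← hy, ← hv] using h2)
  -- the main dimension bookkeeping
  have hinj := ev_injective A
  have hrange := ev_range A
  have hmapcob := ev_map_coboundaries A
  rw [← hx, ← hu, ← hv] at hrange hmapcob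
  rw [← hsa, ← hsb] at hrange
  -- Z¹ ≃ ker ℓ
  let e : oneCocycles (Rep.of (repOfChar A)) ≃ₗ[F] LinearMap.ker (ellMap sa sb) :=
    (LinearEquiv.ofInjective (ev A) hinj).trans (LinearEquiv.ofEq _ _ hrange)
  haveI : FiniteDimensional F (LinearMap.ker (ellMap sa sb)) := inferInstance
  haveI hFD : FiniteDimensional F (oneCocycles (Rep.of (repOfChar A))) :=
    Module.Finite.equiv e.symm
  have hZ : finrank F (oneCocycles (Rep.of (repOfChar A)))
      = finrank F (LinearMap.ker (ellMap sa sb)) := e.finrank_eq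
  -- B¹ has the rank of range dMap
  have hB : finrank F (oneCoboundaries (Rep.of (repOfChar A)))
      = finrank F (LinearMap.range (dMap (u : F) (v : F))) := by
    rw [← hmapcob]
    exact (Submodule.equivMapOfInjective (ev A) hinj _).finrank_eq
  have hquot := Submodule.finrank_quotient_add_finrank
    (oneCoboundaries (Rep.of (repOfChar A)))
  have hH1 : finrank F (groupCohomology.H1 (Rep.of (repOfChar A)))
      = finrank F (LinearMap.ker (ellMap sa sb))
        - finrank F (LinearMap.range (dMap (u : F) (v : F))) := by
    have h0 : finrank F (groupCohomology.H1 (Rep.of (repOfChar A)))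
        + finrank F (oneCoboundaries (Rep.of (repOfChar A)))
        = finrank F (oneCocycles (Rep.of (repOfChar A))) := by rw [finrank_H1_eq]; exact hquot
    omega
  rw [hH1, finrank_ker_ell, finrank_range_dMap]
  -- now pure case analysis
  by_cases hA : A = 1
  · rw [if_pos hA]
    obtain ⟨hu1, hv1⟩ := hA1.1 hA
    have hsa0 : sa ≠ 0 := by
      rw [hsa, hu1]
      simpa [hsum_one] using haF
    rw [if_neg (by tauto), if_pos ⟨by rw [hu1]; rfl, by rw [hv1]; rfl⟩]
  · rw [if_neg hA]
    have hne : ¬((u : F) = 1 ∧ (v : F) = 1) := by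
      rintro ⟨h1, h2⟩
      exact hA (hA1.2 ⟨Units.ext h1, Units.ext h2⟩)
    rw [if_neg hne]
    by_cases hC : u ^ a = 1 ∧ v ^ b = 1 ∧ u ≠ 1 ∧ v ≠ 1
    · rw [if_pos hC]
      obtain ⟨h1, h2, h3, h4⟩ := hC
      have hsa0 : sa = 0 := hsa_iff.2 ⟨by rw [← Units.val_pow_eq_pow_val, h1, Units.val_one],
        fun h => h3 (Units.ext h)⟩
      have hsb0 : sb = 0 := hsb_iff.2 ⟨by rw [← Units.val_pow_eq_pow_val, h2, Units.val_one],
        fun h => h4 (Units.ext h)⟩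
      rw [if_pos ⟨hsa0, hsb0⟩]
    · rw [if_neg hC]
      have : ¬(sa = 0 ∧ sb = 0) := by
        rintro ⟨h1, h2⟩
        obtain ⟨ha1, ha2⟩ := hsa_iff.1 h1
        obtain ⟨hb1, hb2⟩ := hsb_iff.1 h2
        exact hC ⟨Units.ext (by rw [Units.val_pow_eq_pow_val]; exact ha1),
          Units.ext (by rw [Units.val_pow_eq_pow_val]; exact hb1),
          fun h => ha2 (congrArg Units.val h), fun h => hb2 (congrArg Units.val h)⟩
      rw [if_neg this]
end

section
/- Let G be a finite group, χ an irreducible complex character of G, z ∈ G, and w(x₁,…,x_n) a word in n letters. Then (1/|G|ⁿ) Σ_{x₁,…,x_n ∈ G} χ(w(x₁,…,x_n)·z) = (χ(z)/χ(1)) · (1/|G|ⁿ) Σ_{x₁,…,x_n ∈ G} χ(w(x₁,…,x_n)). -/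
open CategoryTheory

lemma freeGroup_lift_conj {G : Type} [Group G] {n : ℕ} (x : Fin n → G) (g : G)
    (w : FreeGroup (Fin n)) :
    FreeGroup.lift (fun i => g * x i * g⁻¹) w = g * FreeGroup.lift x w * g⁻¹ := by
  have : FreeGroup.lift (fun i => g * x i * g⁻¹) =
      (MulAut.conj g).toMonoidHom.comp (FreeGroup.lift x) := by
    apply FreeGroup.ext_hom
    intro a
    simp [MulAut.conj]
  rw [this]
  simp [MulAut.conj]

/-- Let `G` be a finite group, `χ` an irreducible complex character of `G`,
`z ∈ G`, and `w(x₁,…,x_n)` a word in `n` letters (an element of the free group `F_n`,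
evaluated at tuples of elements of `G`). Then
`(1/|G|ⁿ) Σ_{x₁,…,x_n} χ(w(x₁,…,x_n)·z) = (χ(z)/χ(1)) · (1/|G|ⁿ) Σ_{x₁,…,x_n} χ(w(x₁,…,x_n))`. -/
theorem stmt18 (G : Type) [Group G] [Fintype G] (V : FDRep ℂ G) (hV : Simple V)
    (n : ℕ) (w : FreeGroup (Fin n)) (z : G) :
    (1 / (Fintype.card G : ℂ) ^ n) *
        ∑ x : Fin n → G, V.character (FreeGroup.lift x w * z) =
      (V.character z / V.character 1) *
        ((1 / (Fintype.card G : ℂ) ^ n) *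
          ∑ x : Fin n → G, V.character (FreeGroup.lift x w)) := by
  classical
  -- the averaging operator as a linear map
  set T : V →ₗ[ℂ] V := ∑ x : Fin n → G, V.ρ (FreeGroup.lift x w) with hT
  -- T commutes with the action
  have hcomm : ∀ g : G, T * V.ρ g = V.ρ g * T := by
    intro g
    rw [hT, Finset.sum_mul, Finset.mul_sum]
    refine Fintype.sum_equiv
      (Equiv.piCongrRight fun _ => (MulAut.conj g⁻¹).toEquiv) _ _ ?_
    intro x
    have hx : (V.ρ (FreeGroup.lift (fun i => g⁻¹ * x i * g⁻¹⁻¹) w))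
        = V.ρ g⁻¹ * V.ρ (FreeGroup.lift x w) * V.ρ g := by
      rw [freeGroup_lift_conj x g⁻¹ w]; simp [map_mul]
    have : V.ρ (FreeGroup.lift ((Equiv.piCongrRight fun _ => (MulAut.conj g⁻¹).toEquiv) x) w)
        = V.ρ (FreeGroup.lift (fun i => g⁻¹ * x i * g⁻¹⁻¹) w) := rfl
    rw [this, hx, ← map_mul, ← mul_assoc, ← mul_assoc, ← map_mul, mul_inv_cancel, map_one,
      one_mul]
    exact map_mul V.ρ _ _
  -- T as a morphism of representations
  let Thom : V ⟶ V := ⟨FGModuleCat.ofHom T, fun g => by ext v; exact LinearMap.congr_fun (hcomm g) v⟩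
  -- Schur's lemma
  obtain ⟨c, hc⟩ := CategoryTheory.endomorphism_simple_eq_smul_id (𝕜 := ℂ) Thom
  have hThom : T = c • (1 : Module.End ℂ V) := by
    have := congrArg (fun f : V ⟶ V => f.hom.hom.hom) hc
    exact this.symm
  -- trace identities
  have h1 : ∑ x : Fin n → G, V.character (FreeGroup.lift x w * z) = c * V.character z := by
    have e1 : ∑ x : Fin n → G, V.character (FreeGroup.lift x w * z)
        = LinearMap.trace ℂ V (T * V.ρ z) := by
      rw [hT, Finset.sum_mul, map_sum]
      refine Finset.sum_congr rfl fun x _ => ?_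
      rw [FDRep.character, map_mul]
    rw [e1, hThom, smul_mul_assoc, one_mul, map_smul, smul_eq_mul]
    rfl
  have h2 : ∑ x : Fin n → G, V.character (FreeGroup.lift x w) = c * V.character 1 := by
    have e2 : ∑ x : Fin n → G, V.character (FreeGroup.lift x w) = LinearMap.trace ℂ V T := by
      rw [hT, map_sum]
      rfl
    rw [e2, hThom, map_smul, smul_eq_mul, LinearMap.trace_one, FDRep.char_one]
  -- χ(1) ≠ 0
  have hne : V.character 1 ≠ 0 := by
    rw [FDRep.char_one]
    simp only [ne_eq, Nat.cast_eq_zero]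
    intro h0
    have hsub : Subsingleton V := (Module.finrank_zero_iff (R := ℂ) (M := V)).mp h0
    apply CategoryTheory.id_nonzero V
    ext v
    exact @Subsingleton.elim V hsub _ _
  have hN : (Fintype.card G : ℂ) ≠ 0 := Nat.cast_ne_zero.mpr Fintype.card_ne_zero
  have hd : ((Module.finrank ℂ V : ℕ) : ℂ) ≠ 0 := by rwa [FDRep.char_one] at hne
  rw [h1, h2, FDRep.char_one]
  field_simp
end
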